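/- Let P be a positive cone of the additive group ℤ × ℤ, and let (a,b) ∈ ℤ × ℤ with b > 0 and gcd(a,b) = 1. Suppose the cyclic subgroup H = { k·(a,b) : k ∈ ℤ } is convex with respect to P, i.e., whenever h₁, h₂ ∈ H and g ∈ ℤ × ℤ satisfy g − h₁ ∈ P ∪ {0} and h₂ − g ∈ P ∪ {0}, then g ∈ H. Then for any pairs (m₁, n₁) and (m₂, n₂) of integers with n₁ > 0, n₂ > 0, m₁·b − a·n₁ > 0 and m₂·b − a·n₂ > 0, one has (m₁, n₁) ∈ P if and only if (m₂, n₂) ∈ P. -/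

import Mathlib

/-- A positive cone of the additive group `ℤ × ℤ`: a subset `P` closed under addition
such that `ℤ × ℤ` is the disjoint union of `P`, `{0}` and `−P`. -/
def IsAddPositiveCone (P : Set (ℤ × ℤ)) : Prop :=
  (∀ a ∈ P, ∀ b ∈ P, a + b ∈ P) ∧
  (∀ g : ℤ × ℤ, g ∈ P ∨ g = 0 ∨ -g ∈ P) ∧
  (0 : ℤ × ℤ) ∉ P ∧
  (∀ g ∈ P, -g ∉ P)

lemma pos_smul_mem (P : Set (ℤ × ℤ)) (hP : IsAddPositiveCone P)
    (x : ℤ × ℤ) (hx : x ∈ P) : ∀ n : ℤ, 0 < n → n • x ∈ P := by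
  intro n hn
  obtain ⟨m, rfl⟩ := Int.eq_ofNat_of_zero_le hn.le
  induction m with
  | zero => simp at hn
  | succ k ih =>
    rcases Nat.eq_zero_or_pos k with hk | hk
    · subst hk; simpa using hx
    · have : ((k : ℤ) + 1) • x = (k : ℤ) • x + x := by
        rw [add_smul, one_smul]
      rw [Int.natCast_add_one, this]
      exact hP.1 _ (ih (by exact_mod_cast hk)) _ hx

lemma key (P : Set (ℤ × ℤ)) (hP : IsAddPositiveCone P)
    (a b : ℤ)
    (hconv : ∀ h₁ h₂ g : ℤ × ℤ, (∃ k : ℤ, h₁ = k • ((a, b) : ℤ × ℤ)) →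
      (∃ k : ℤ, h₂ = k • ((a, b) : ℤ × ℤ)) →
      g - h₁ ∈ P ∪ {0} → h₂ - g ∈ P ∪ {0} → ∃ k : ℤ, g = k • ((a, b) : ℤ × ℤ))
    (m₁ n₁ m₂ n₂ : ℤ) (hn₂ : 0 < n₂)
    (h₁ : 0 < m₁ * b - a * n₁) (h₂ : 0 < m₂ * b - a * n₂)
    (hu : ((m₁, n₁) : ℤ × ℤ) ∈ P) : ((m₂, n₂) : ℤ × ℤ) ∈ P := by
  by_contra hv
  have hvne : ((m₂, n₂) : ℤ × ℤ) ≠ 0 := by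
    intro h
    rw [Prod.ext_iff] at h
    exact hn₂.ne' h.2
  have hnv : -((m₂, n₂) : ℤ × ℤ) ∈ P := by
    rcases hP.2.1 (m₂, n₂) with h | h | h
    · exact absurd h hv
    · exact absurd h hvne
    · exact h
  have hg : (m₂ * b - a * n₂) • ((m₁, n₁) : ℤ × ℤ) ∈ P := pos_smul_mem P hP _ hu _ h₂
  have hh : (m₁ * b - a * n₁) • (-((m₂, n₂) : ℤ × ℤ)) ∈ P := pos_smul_mem P hP _ hnv _ h₁
  have hdecomp : (m₂ * n₁ - m₁ * n₂) • ((a, b) : ℤ × ℤ) - (m₂ * b - a * n₂) • ((m₁, n₁) : ℤ × ℤ)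
      = (m₁ * b - a * n₁) • (-((m₂, n₂) : ℤ × ℤ)) := by
    simp only [Prod.ext_iff, Prod.smul_mk, smul_eq_mul, Prod.mk_sub_mk, Prod.neg_mk,
      Prod.smul_def, Prod.fst_sub, Prod.snd_sub]
    constructor <;> ring
  obtain ⟨k, hk⟩ := hconv 0 ((m₂ * n₁ - m₁ * n₂) • ((a, b) : ℤ × ℤ))
    ((m₂ * b - a * n₂) • ((m₁, n₁) : ℤ × ℤ)) ⟨0, by simp⟩ ⟨m₂ * n₁ - m₁ * n₂, rfl⟩
    (by rw [sub_zero]; exact Or.inl hg) (by rw [hdecomp]; exact Or.inl hh)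
  rw [Prod.ext_iff] at hk
  simp only [Prod.smul_mk, smul_eq_mul] at hk
  obtain ⟨hka, hkb⟩ := hk
  have h0 : (m₂ * b - a * n₂) * (m₁ * b - a * n₁) = 0 := by
    linear_combination b * hka - a * hkb
  nlinarith [mul_pos h₂ h₁]

theorem stmt8 (P : Set (ℤ × ℤ)) (hP : IsAddPositiveCone P)
    (a b : ℤ) (hb : 0 < b) (hgcd : Int.gcd a b = 1)
    (hconv : ∀ h₁ h₂ g : ℤ × ℤ, (∃ k : ℤ, h₁ = k • ((a, b) : ℤ × ℤ)) →
      (∃ k : ℤ, h₂ = k • ((a, b) : ℤ × ℤ)) →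
      g - h₁ ∈ P ∪ {0} → h₂ - g ∈ P ∪ {0} → ∃ k : ℤ, g = k • ((a, b) : ℤ × ℤ))
    (m₁ n₁ m₂ n₂ : ℤ) (hn₁ : 0 < n₁) (hn₂ : 0 < n₂)
    (h₁ : 0 < m₁ * b - a * n₁) (h₂ : 0 < m₂ * b - a * n₂) :
    ((m₁, n₁) : ℤ × ℤ) ∈ P ↔ ((m₂, n₂) : ℤ × ℤ) ∈ P := by
  constructor
  · exact key P hP a b hconv m₁ n₁ m₂ n₂ hn₂ h₁ h₂
  · exact key P hP a b hconv m₂ n₂ m₁ n₁ hn₁ h₂ h₁
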